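/- Let a, b ∈ ℝ_{++}ⁿ be strictly positive probability vectors, C ∈ ℝ₊^{n×n}, γ > 0, K := exp(−C/γ), and let (f*, g*) be any dual optimal solution (i.e. diag(e^{f*/γ}) K diag(e^{g*/γ}) has row sums a and column sums b). Let (f, g) ∈ ℝⁿ×ℝⁿ and let (f', g') be obtained from (f, g) by a single coordinate update: either g' = g and f'_I = γ log a_I − γ log(K e^{g/γ})_I for some index I with f'_i = f_i for i ≠ I, or f' = f and g'_J = γ log b_J − γ log(Kᵀ e^{f/γ})_J for some index J with g'_j = g_j for j ≠ J. Then max(‖f' − f*‖_∞, ‖g' − g*‖_∞) ≤ max(‖f − f*‖_∞, ‖g − g*‖_∞). -/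

import Mathlib

lemma log_sum_exp_sub_le {n : ℕ} [Nonempty (Fin n)] {γ : ℝ} (hγ : 0 < γ)
    (w u v : Fin n → ℝ) (hw : ∀ j, 0 < w j) :
    γ * Real.log (∑ j, w j * Real.exp (u j / γ)) -
      γ * Real.log (∑ j, w j * Real.exp (v j / γ)) ≤ ⨆ j, |u j - v j| := by
  set M := ⨆ j, |u j - v j| with hM
  have hbdd : BddAbove (Set.range fun j => |u j - v j|) :=
    (Set.finite_range _).bddAbove
  have hub : ∀ j, u j ≤ v j + M := by
    intro j
    have := le_ciSup hbdd j
    have := abs_le.mp (le_trans (le_refl _) this)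
    linarith [this.2]
  have hSv : 0 < ∑ j, w j * Real.exp (v j / γ) :=
    Finset.sum_pos (fun j _ => mul_pos (hw j) (Real.exp_pos _)) Finset.univ_nonempty
  have hSu : 0 < ∑ j, w j * Real.exp (u j / γ) :=
    Finset.sum_pos (fun j _ => mul_pos (hw j) (Real.exp_pos _)) Finset.univ_nonempty
  have hle : ∑ j, w j * Real.exp (u j / γ) ≤
      Real.exp (M / γ) * ∑ j, w j * Real.exp (v j / γ) := by
    rw [Finset.mul_sum]
    apply Finset.sum_le_sum
    intro j _
    rw [mul_left_comm]
    apply mul_le_mul_of_nonneg_left _ (hw j).le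
    rw [← Real.exp_add]
    apply Real.exp_le_exp.mpr
    rw [← add_div]
    exact div_le_div_of_nonneg_right (by linarith [hub j]) hγ.le
  have hlog : Real.log (∑ j, w j * Real.exp (u j / γ)) ≤
      M / γ + Real.log (∑ j, w j * Real.exp (v j / γ)) := by
    calc Real.log (∑ j, w j * Real.exp (u j / γ))
        ≤ Real.log (Real.exp (M / γ) * ∑ j, w j * Real.exp (v j / γ)) :=
          Real.log_le_log hSu hle
      _ = M / γ + Real.log (∑ j, w j * Real.exp (v j / γ)) := by
          rw [Real.log_mul (Real.exp_ne_zero _) hSv.ne', Real.log_exp]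
  have h2 := mul_le_mul_of_nonneg_left hlog hγ.le
  have h3 : γ * (M / γ) = M := by field_simp
  rw [mul_add, h3] at h2
  linarith

lemma abs_log_sum_exp_sub_le {n : ℕ} [Nonempty (Fin n)] {γ : ℝ} (hγ : 0 < γ)
    (w u v : Fin n → ℝ) (hw : ∀ j, 0 < w j) :
    |γ * Real.log (∑ j, w j * Real.exp (u j / γ)) -
      γ * Real.log (∑ j, w j * Real.exp (v j / γ))| ≤ ⨆ j, |u j - v j| := by
  rw [abs_sub_le_iff]
  constructor
  · exact log_sum_exp_sub_le hγ w u v hw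
  · have := log_sum_exp_sub_le hγ w v u hw
    simpa [abs_sub_comm] using this

lemma updated_coord_bound {n : ℕ} [Nonempty (Fin n)] {γ : ℝ} (hγ : 0 < γ)
    (w u v : Fin n → ℝ) (hw : ∀ j, 0 < w j) (aI t : ℝ)
    (hstar : aI = Real.exp (t / γ) * ∑ j, w j * Real.exp (v j / γ)) :
    |(γ * Real.log aI - γ * Real.log (∑ j, w j * Real.exp (u j / γ))) - t| ≤
      ⨆ j, |u j - v j| := by
  have hSv : 0 < ∑ j, w j * Real.exp (v j / γ) :=
    Finset.sum_pos (fun j _ => mul_pos (hw j) (Real.exp_pos _)) Finset.univ_nonempty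
  have hlogaI : γ * Real.log aI = t + γ * Real.log (∑ j, w j * Real.exp (v j / γ)) := by
    rw [hstar, Real.log_mul (Real.exp_ne_zero _) hSv.ne', Real.log_exp]
    field_simp
  have key := abs_log_sum_exp_sub_le hγ w v u hw
  rw [hlogaI]
  have : (t + γ * Real.log (∑ j, w j * Real.exp (v j / γ)) -
      γ * Real.log (∑ j, w j * Real.exp (u j / γ))) - t =
      γ * Real.log (∑ j, w j * Real.exp (v j / γ)) -
      γ * Real.log (∑ j, w j * Real.exp (u j / γ)) := by ring
  rw [this]
  simpa [abs_sub_comm] using key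


/-- The dual entropic OT objective
`h(f,g) = ⟨f,a⟩ + ⟨g,b⟩ − γ Σ_{i,j} exp((f_i + g_j − C_{ij})/γ)`. -/
noncomputable def dualObj {n : ℕ} (a b : Fin n → ℝ) (C : Matrix (Fin n) (Fin n) ℝ)
    (γ : ℝ) (f g : Fin n → ℝ) : ℝ :=
  (∑ i, f i * a i) + (∑ j, g j * b j) -
    γ * ∑ i, ∑ j, Real.exp ((f i + g j - C i j) / γ)

/-- The transport plan `P = diag(e^{f/γ}) K diag(e^{g/γ})` with `K = exp(−C/γ)`. -/
noncomputable def plan {n : ℕ} (C : Matrix (Fin n) (Fin n) ℝ) (γ : ℝ)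
    (f g : Fin n → ℝ) : Matrix (Fin n) (Fin n) ℝ :=
  fun i j => Real.exp (f i / γ) * Real.exp (-C i j / γ) * Real.exp (g j / γ)

/-- The scalar Bregman divergence `ρ(x,y) = y − x + x log(x/y)`. -/
noncomputable def rho (x y : ℝ) : ℝ := y - x + x * Real.log (x / y)

/-- **Non-expansiveness of a single coordinate update in the sup-norm**
(Lemma 3.1 of Lin–Ho–Jordan): if `(f', g')` is obtained from `(f, g)` by a single
Greenkhorn-type coordinate update, then for any dual optimal solution `(f*, g*)`,
`max(‖f' − f*‖_∞, ‖g' − g*‖_∞) ≤ max(‖f − f*‖_∞, ‖g − g*‖_∞)`. -/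
theorem greenkhorn_update_nonexpansive {n : ℕ} (a b : Fin n → ℝ)
    (C : Matrix (Fin n) (Fin n) ℝ) (γ : ℝ) (hγ : 0 < γ)
    (ha0 : ∀ i, 0 < a i) (hb0 : ∀ j, 0 < b j)
    (ha1 : ∑ i, a i = 1) (hb1 : ∑ j, b j = 1)
    (hC : ∀ i j, 0 ≤ C i j)
    (fs gs : Fin n → ℝ)
    (hfs : ∀ i, ∑ j, plan C γ fs gs i j = a i)
    (hgs : ∀ j, ∑ i, plan C γ fs gs i j = b j)
    (f g f' g' : Fin n → ℝ)
    (hupd : (∃ I : Fin n, g' = g ∧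
        f' = Function.update f I (γ * Real.log (a I) -
          γ * Real.log (∑ j, Real.exp (-C I j / γ) * Real.exp (g j / γ)))) ∨
      (∃ J : Fin n, f' = f ∧
        g' = Function.update g J (γ * Real.log (b J) -
          γ * Real.log (∑ i, Real.exp (-C i J / γ) * Real.exp (f i / γ))))) :
    max (⨆ i, |f' i - fs i|) (⨆ j, |g' j - gs j|) ≤
      max (⨆ i, |f i - fs i|) (⨆ j, |g j - gs j|) := by
  rcases hupd with ⟨I, hg', hf'⟩ | ⟨J, hf', hg'⟩
  · simp only [hg', hf'] at *
    clear hf' hg'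
    have hne : Nonempty (Fin n) := ⟨I⟩
    have hstar : a I = Real.exp (fs I / γ) *
        ∑ j, Real.exp (-C I j / γ) * Real.exp (gs j / γ) := by
      rw [← hfs I, Finset.mul_sum]
      exact Finset.sum_congr rfl fun j _ => by simp only [plan]; ring
    have hI := updated_coord_bound hγ (fun j => Real.exp (-C I j / γ)) g gs
      (fun j => Real.exp_pos _) (a I) (fs I) hstar
    apply max_le
    · apply ciSup_le; intro i
      by_cases hi : i = I
      · subst hi
        rw [Function.update_self]
        exact hI.trans (le_max_right _ _)
      · rw [Function.update_of_ne hi]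
        exact le_trans (le_ciSup (f := fun i => |f i - fs i|) ((Set.finite_range _).bddAbove) i) (le_max_left _ _)
    · exact le_max_right _ _
  · simp only [hf', hg'] at *
    clear hf' hg'
    have hne : Nonempty (Fin n) := ⟨J⟩
    have hstar : b J = Real.exp (gs J / γ) *
        ∑ i, Real.exp (-C i J / γ) * Real.exp (fs i / γ) := by
      rw [← hgs J, Finset.mul_sum]
      exact Finset.sum_congr rfl fun i _ => by simp only [plan]; ring
    have hJ := updated_coord_bound hγ (fun i => Real.exp (-C i J / γ)) f fs
      (fun i => Real.exp_pos _) (b J) (gs J) hstar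
    apply max_le
    · exact le_max_left _ _
    · apply ciSup_le; intro j
      by_cases hj : j = J
      · subst hj
        rw [Function.update_self]
        exact hJ.trans (le_max_left _ _)
      · rw [Function.update_of_ne hj]
        exact le_trans (le_ciSup (f := fun j => |g j - gs j|) ((Set.finite_range _).bddAbove) j) (le_max_right _ _)
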